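/- Base case of the ejection integral bound for one mode (K = 1): assume that λ₁, a₁⁻, a₁⁺ ∈ C([t₁,t₂]) with λ₁ > 0 satisfy the ignition condition with parameters (1/2, c₂, C₂) for some c₂, C₂ > 0, where d_par(t) = sqrt(a₁⁺(t)² + a₁⁻(t)²). Then ∫_{t₁}^{t₂} d_par(t) dt ≤ C₂ (d_par(t₁)λ₁(t₁) + d_par(t₂)λ₁(t₂)). -/

import Mathlib

open Set

/-- The parameter proximity function `d_par`, built from the scale ratios of
same-sign neighbouring bubbles and the stable/unstable components. -/
noncomputable def dpar (K : ℕ) (ι : ℕ → ℝ) (lam am ap : ℕ → ℝ → ℝ) (t : ℝ) : ℝ :=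
  Real.sqrt
    ((∑ i ∈ Finset.Icc 1 (K - 1), if ι i = ι (i + 1) then lam i t / lam (i + 1) t else 0)
      + ∑ i ∈ Finset.Icc 1 K, ((ap i t) ^ 2 + (am i t) ^ 2))

/-- The ignition condition with parameters `c₁, c₂, C₂` on the time interval `I`. -/
def IgnitionCondition (K : ℕ) (ι : ℕ → ℝ) (lam am ap : ℕ → ℝ → ℝ)
    (I : Set ℝ) (c₁ c₂ C₂ : ℝ) : Prop :=
  ∀ t₁ t₂ : ℝ, t₁ ≤ t₂ → Set.Icc t₁ t₂ ⊆ I →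
    ∀ t₀ ∈ Set.Icc t₁ t₂, ∀ j : ℕ, 1 ≤ j → j ≤ K →
    ((((∀ t ∈ Set.Icc t₁ t₂,
          (∑ i ∈ Finset.Icc 1 (K - 1),
              if ι i = ι (i + 1) ∧ i < j then lam i t / lam (i + 1) t else 0)
            + ∑ i ∈ Finset.Icc 1 (j - 1), ((ap i t) ^ 2 + (am i t) ^ 2)
          ≤ c₂ * (dpar K ι lam am ap t) ^ 2)
        ∧ c₁ * (dpar K ι lam am ap t₀) ^ 2 ≤ (ap j t₀) ^ 2 + (am j t₀) ^ 2)
      ∨ ((∀ t ∈ Set.Icc t₁ t₂,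
          (∑ i ∈ Finset.Icc 1 (K - 1),
              if ι i = ι (i + 1) ∧ i < j - 1 then lam i t / lam (i + 1) t else 0)
            + ∑ i ∈ Finset.Icc 1 (j - 1), ((ap i t) ^ 2 + (am i t) ^ 2)
          ≤ c₂ * (dpar K ι lam am ap t) ^ 2)
        ∧ 2 ≤ j
        ∧ c₁ * (dpar K ι lam am ap t₀) ^ 2
            ≤ ι (j - 1) * ι j * (lam (j - 1) t₀ / lam j t₀))) →
      ((∫ t in t₁..t₀, dpar K ι lam am ap t)
          ≤ C₂ * dpar K ι lam am ap t₁ * lam K t₁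
        ∨ (∫ t in t₀..t₂, dpar K ι lam am ap t)
          ≤ C₂ * dpar K ι lam am ap t₂ * lam K t₂))

theorem stmt_17 (t₁ t₂ : ℝ) (ht : t₁ ≤ t₂) (ι : ℕ → ℝ) (lam am ap : ℕ → ℝ → ℝ)
    (hι : ι 1 = 1 ∨ ι 1 = -1)
    (hlam_pos : ∀ t ∈ Set.Icc t₁ t₂, 0 < lam 1 t)
    (hlam_cont : ContinuousOn (lam 1) (Set.Icc t₁ t₂))
    (ham_cont : ContinuousOn (am 1) (Set.Icc t₁ t₂))
    (hap_cont : ContinuousOn (ap 1) (Set.Icc t₁ t₂))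
    (c₂ C₂ : ℝ) (hc₂ : 0 < c₂) (hC₂ : 0 < C₂)
    (hign : IgnitionCondition 1 ι lam am ap (Set.Icc t₁ t₂) (1 / 2) c₂ C₂) :
    (∫ t in t₁..t₂, dpar 1 ι lam am ap t)
      ≤ C₂ * (dpar 1 ι lam am ap t₁ * lam 1 t₁ + dpar 1 ι lam am ap t₂ * lam 1 t₂) := by
  set f := dpar 1 ι lam am ap with hfdef
  have hfeq : ∀ t, f t = Real.sqrt ((ap 1 t) ^ 2 + (am 1 t) ^ 2) := by
    intro t; simp [hfdef, dpar]
  have hf0 : ∀ t, 0 ≤ f t := by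
    intro t; rw [hfeq]; exact Real.sqrt_nonneg _
  have hfc : ContinuousOn f (Icc t₁ t₂) := by
    have : ContinuousOn (fun t => Real.sqrt ((ap 1 t) ^ 2 + (am 1 t) ^ 2)) (Icc t₁ t₂) :=
      Real.continuous_sqrt.comp_continuousOn
        (((hap_cont.pow 2).add (ham_cont.pow 2)))
    exact this.congr fun t _ => hfeq t
  have huIcc : uIcc t₁ t₂ = Icc t₁ t₂ := uIcc_of_le ht
  have hIntOn : MeasureTheory.IntegrableOn f (uIcc t₁ t₂) MeasureTheory.volume := by
    rw [huIcc]
    exact hfc.integrableOn_compact isCompact_Icc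
  have hInt : ∀ a ∈ Icc t₁ t₂, ∀ b ∈ Icc t₁ t₂, IntervalIntegrable f MeasureTheory.volume a b := by
    intro a ha b hb
    exact (hIntOn.mono_set (by rw [huIcc]; exact uIcc_subset_Icc ha hb)).intervalIntegrable
  -- the key dichotomy from the ignition condition
  have key : ∀ t₀ ∈ Icc t₁ t₂,
      (∫ t in t₁..t₀, f t) ≤ C₂ * f t₁ * lam 1 t₁ ∨
      (∫ t in t₀..t₂, f t) ≤ C₂ * f t₂ * lam 1 t₂ := by
    intro t₀ ht₀
    refine hign t₁ t₂ ht subset_rfl t₀ ht₀ 1 le_rfl le_rfl ?_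
    left
    constructor
    · intro t _
      simp only [Nat.sub_self]
      have : Finset.Icc 1 0 = (∅ : Finset ℕ) := by decide
      rw [this]
      simp only [Finset.sum_empty, add_zero]
      positivity
    · have : f t₀ ^ 2 = (ap 1 t₀) ^ 2 + (am 1 t₀) ^ 2 := by
        rw [hfeq]; exact Real.sq_sqrt (by positivity)
      rw [hfdef] at this
      rw [this]
      nlinarith [sq_nonneg (ap 1 t₀), sq_nonneg (am 1 t₀)]
  set B₁ := C₂ * f t₁ * lam 1 t₁ with hB₁
  set B₂ := C₂ * f t₂ * lam 1 t₂ with hB₂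
  have hB₁0 : 0 ≤ B₁ :=
    mul_nonneg (mul_nonneg hC₂.le (hf0 t₁)) (hlam_pos t₁ ⟨le_refl _, ht⟩).le
  have hB₂0 : 0 ≤ B₂ :=
    mul_nonneg (mul_nonneg hC₂.le (hf0 t₂)) (hlam_pos t₂ ⟨ht, le_refl _⟩).le
  set F := fun x => ∫ t in t₁..x, f t with hF
  set G := fun x => ∫ t in x..t₂, f t with hG
  have hFc : ContinuousOn F (Icc t₁ t₂) := by
    rw [← huIcc]; exact intervalIntegral.continuousOn_primitive_interval hIntOn
  have hGc : ContinuousOn G (Icc t₁ t₂) := by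
    rw [← huIcc]; exact intervalIntegral.continuousOn_primitive_interval_left hIntOn
  set S := {x | x ∈ Icc t₁ t₂ ∧ F x ≤ B₁} with hSdef
  set T := {x | x ∈ Icc t₁ t₂ ∧ G x ≤ B₂} with hTdef
  have hSclosed : IsClosed S := by
    have : S = Icc t₁ t₂ ∩ F ⁻¹' Iic B₁ := rfl
    rw [this]
    exact hFc.preimage_isClosed_of_isClosed isClosed_Icc isClosed_Iic
  have hTclosed : IsClosed T := by
    have : T = Icc t₁ t₂ ∩ G ⁻¹' Iic B₂ := rfl
    rw [this]
    exact hGc.preimage_isClosed_of_isClosed isClosed_Icc isClosed_Iic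
  have ht₁S : t₁ ∈ S := by
    refine ⟨⟨le_refl _, ht⟩, ?_⟩
    simp [hF, intervalIntegral.integral_same, hB₁0]
  have ht₂T : t₂ ∈ T := by
    refine ⟨⟨ht, le_refl _⟩, ?_⟩
    simp [hG, intervalIntegral.integral_same, hB₂0]
  have hSbdd : BddAbove S := ⟨t₂, fun x hx => hx.1.2⟩
  have hTbdd : BddBelow T := ⟨t₁, fun x hx => hx.1.1⟩
  set s := sSup S with hs
  set u := sInf T with hu
  have hsS : s ∈ S := hSclosed.csSup_mem ⟨t₁, ht₁S⟩ hSbdd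
  have huT : u ∈ T := hTclosed.csInf_mem ⟨t₂, ht₂T⟩ hTbdd
  have hus : u ≤ s := by
    by_contra h
    push_neg at h
    set t₀ := (s + u) / 2 with ht₀def
    have hst₀ : s < t₀ := by rw [ht₀def]; linarith
    have ht₀u : t₀ < u := by rw [ht₀def]; linarith
    have ht₀mem : t₀ ∈ Icc t₁ t₂ :=
      ⟨le_trans hsS.1.1 hst₀.le, le_trans ht₀u.le huT.1.2⟩
    rcases key t₀ ht₀mem with h1 | h2
    · exact absurd (le_csSup hSbdd ⟨ht₀mem, h1⟩) (not_le.mpr hst₀)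
    · exact absurd (csInf_le hTbdd ⟨ht₀mem, h2⟩) (not_le.mpr ht₀u)
  -- split the integral at s
  have hsplit : (∫ t in t₁..t₂, f t) = F s + G s := by
    rw [hF, hG]
    exact (intervalIntegral.integral_add_adjacent_intervals
      (hInt t₁ ⟨le_refl _, ht⟩ s hsS.1) (hInt s hsS.1 t₂ ⟨ht, le_refl _⟩)).symm
  have hGs : G s ≤ B₂ := by
    have hsplit2 : G u = (∫ t in u..s, f t) + G s := by
      rw [hG]
      exact (intervalIntegral.integral_add_adjacent_intervals
        (hInt u huT.1 s hsS.1) (hInt s hsS.1 t₂ ⟨ht, le_refl _⟩)).symm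
    have hnn : 0 ≤ ∫ t in u..s, f t :=
      intervalIntegral.integral_nonneg hus (fun x _ => hf0 x)
    linarith [huT.2]
  calc (∫ t in t₁..t₂, f t) = F s + G s := hsplit
    _ ≤ B₁ + B₂ := add_le_add hsS.2 hGs
    _ = C₂ * (f t₁ * lam 1 t₁ + f t₂ * lam 1 t₂) := by rw [hB₁, hB₂]; ring
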